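/- There exists an automorphism of the group K sending a ↦ a^(−1)·c^r, b ↦ a^r·b^(r²)·c^(−r²), c ↦ a^(−r²)·b^(r²)·c^(−r²), and h ↦ h·a^(−r)·b·c^(r²). -/

import Mathlib

/-- The group `K = (ZMod n)³ ⋊ Z₃`, where the generator of `Z₃` acts on `(ZMod n)³`
by scalar multiplication by `r`.  An element is a pair `⟨v, t⟩` with
`v ∈ (ZMod n)³` and `t ∈ ZMod 3`; multiplication is
`⟨v, i⟩ * ⟨w, j⟩ = ⟨r^j • v + w, i + j⟩`, so that with `a = ⟨(1,0,0),0⟩`,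
`b = ⟨(0,1,0),0⟩`, `c = ⟨(0,0,1),0⟩`, `h = ⟨0,1⟩` the presentation
`aⁿ = bⁿ = cⁿ = h³ = [a,b] = [a,c] = [b,c] = 1`, `h⁻¹ah = a^r`, `h⁻¹bh = b^r`,
`h⁻¹ch = c^r` holds. -/
@[ext]
structure Kgrp (n : ℕ) (r : ZMod n) (hr : r ^ 2 + r + 1 = 0) : Type where
  v : ZMod n × ZMod n × ZMod n
  t : ZMod 3

namespace Kgrp

variable {n : ℕ} {r : ZMod n} {hr : r ^ 2 + r + 1 = 0}

instance : Mul (Kgrp n r hr) :=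
  ⟨fun x y => ⟨(r ^ y.t.val) • x.v + y.v, x.t + y.t⟩⟩

instance : One (Kgrp n r hr) := ⟨⟨0, 0⟩⟩

instance : Inv (Kgrp n r hr) :=
  ⟨fun x => ⟨-((r ^ (-x.t).val) • x.v), -x.t⟩⟩

@[simp] lemma mul_def (x y : Kgrp n r hr) :
    x * y = ⟨(r ^ y.t.val) • x.v + y.v, x.t + y.t⟩ := rfl

@[simp] lemma one_def : (1 : Kgrp n r hr) = ⟨0, 0⟩ := rfl

@[simp] lemma inv_def (x : Kgrp n r hr) :
    x⁻¹ = ⟨-((r ^ (-x.t).val) • x.v), -x.t⟩ := rfl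

lemma r_cube (hr : r ^ 2 + r + 1 = 0) : r ^ 3 = 1 := by
  linear_combination (r - 1) * hr

lemma r_pow_val_add (hr : r ^ 2 + r + 1 = 0) (i j : ZMod 3) :
    r ^ i.val * r ^ j.val = r ^ (i + j).val := by
  have h3 : r ^ 3 = 1 := r_cube hr
  have hval : (i + j).val = (i.val + j.val) % 3 := ZMod.val_add i j
  rw [hval, ← pow_add]
  conv_lhs => rw [← Nat.mod_add_div (i.val + j.val) 3]
  rw [pow_add, pow_mul, h3, one_pow, mul_one]

instance : Group (Kgrp n r hr) :=
  Group.ofLeftAxioms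
    (fun x y z => by
      have hs : r ^ z.t.val * r ^ y.t.val = r ^ (y.t + z.t).val := by
        rw [r_pow_val_add hr, add_comm]
      refine Kgrp.ext ?_ ?_
      · show r ^ z.t.val • ((r ^ y.t.val) • x.v + y.v) + z.v =
            r ^ (y.t + z.t).val • x.v + ((r ^ z.t.val) • y.v + z.v)
        rw [smul_add, smul_smul, hs, add_assoc]
      · show x.t + y.t + z.t = x.t + (y.t + z.t)
        exact add_assoc _ _ _)
    (fun x => by
      refine Kgrp.ext ?_ ?_
      · show r ^ x.t.val • (0 : ZMod n × ZMod n × ZMod n) + x.v = x.v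
        rw [smul_zero, zero_add]
      · show 0 + x.t = x.t
        exact zero_add _)
    (fun x => by
      have hs : r ^ x.t.val * r ^ (-x.t).val = 1 := by
        rw [r_pow_val_add hr]
        simp
      refine Kgrp.ext ?_ ?_
      · show r ^ x.t.val • (-(r ^ (-x.t).val • x.v)) + x.v = 0
        rw [smul_neg, smul_smul, hs, one_smul, neg_add_cancel]
      · show -x.t + x.t = 0
        exact neg_add_cancel _)

/-- The generator `a = ((1,0,0),0)` of `K`. -/
def gena (n : ℕ) (r : ZMod n) (hr : r ^ 2 + r + 1 = 0) : Kgrp n r hr := ⟨(1, 0, 0), 0⟩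

/-- The generator `b = ((0,1,0),0)` of `K`. -/
def genb (n : ℕ) (r : ZMod n) (hr : r ^ 2 + r + 1 = 0) : Kgrp n r hr := ⟨(0, 1, 0), 0⟩

/-- The generator `c = ((0,0,1),0)` of `K`. -/
def genc (n : ℕ) (r : ZMod n) (hr : r ^ 2 + r + 1 = 0) : Kgrp n r hr := ⟨(0, 0, 1), 0⟩

/-- The generator `h = ((0,0,0),1)` of `K`. -/
def genh (n : ℕ) (r : ZMod n) (hr : r ^ 2 + r + 1 = 0) : Kgrp n r hr := ⟨(0, 0, 0), 1⟩

end Kgrp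


section Aux

variable {n : ℕ} {r : ZMod n} {hr : r ^ 2 + r + 1 = 0}

/-- linear map L on the vector part -/
def Lmap (r : ZMod n) (v : ZMod n × ZMod n × ZMod n) : ZMod n × ZMod n × ZMod n :=
  (-v.1 + r * v.2.1 - r ^ 2 * v.2.2,
   r ^ 2 * v.2.1 + r ^ 2 * v.2.2,
   r * v.1 - r ^ 2 * v.2.1 - r ^ 2 * v.2.2)

def Linv (r : ZMod n) (v : ZMod n × ZMod n × ZMod n) : ZMod n × ZMod n × ZMod n :=
  (r ^ 2 * v.2.1 + r ^ 2 * v.2.2,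
   -v.1 + r * v.2.1 - r ^ 2 * v.2.2,
   v.1 + r ^ 2 * v.2.2)

def cf (r : ZMod n) (t : ZMod 3) : ZMod n :=
  if t = 0 then 0 else if t = 1 then 1 else 1 + r

def u0 (r : ZMod n) : ZMod n × ZMod n × ZMod n := (-r, 1, r ^ 2)

lemma Linv_Lmap (hr : r ^ 2 + r + 1 = 0) (v : ZMod n × ZMod n × ZMod n) :
    Linv r (Lmap r v) = v := by
  obtain ⟨x, y, z⟩ := v
  simp only [Lmap, Linv, Prod.mk.injEq]
  refine ⟨?_, ?_, ?_⟩
  · linear_combination (x * (r - 1)) * hr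
  · linear_combination ((r + 1) * (r - 1) * y - (r - 1) * x + r ^ 2 * z) * hr
  · linear_combination ((r - 1) * x - r * (r - 1) * y - (r ^ 2 - r + 1) * z) * hr

lemma Lmap_Linv (hr : r ^ 2 + r + 1 = 0) (v : ZMod n × ZMod n × ZMod n) :
    Lmap r (Linv r v) = v := by
  obtain ⟨x, y, z⟩ := v
  simp only [Lmap, Linv, Prod.mk.injEq]
  refine ⟨?_, ?_, ?_⟩
  · linear_combination (-x - r ^ 2 * z) * hr
  · linear_combination ((r - 1) * y) * hr
  · linear_combination ((r - 1) * z) * hr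

lemma cf_cocycle (hr : r ^ 2 + r + 1 = 0) (i j : ZMod 3) :
    cf r (i + j) = r ^ j.val * cf r i + cf r j := by
  fin_cases i <;> fin_cases j <;>
    simp (config := { decide := true }) [cf, ZMod.val,
      show ((2 : ZMod 3) = 0) ↔ False from by decide,
      show ((2 : ZMod 3) = 1) ↔ False from by decide]
  all_goals split_ifs
  any_goals (exfalso; first | (rename_i h; revert h; change ¬ ((_ : Fin 3) = _); decide) | (rename_i h; revert h; change ¬ ¬ ((_ : Fin 3) = _); decide) | (rename_i h _; revert h; change ¬ ((_ : Fin 3) = _); decide) | (rename_i h _; revert h; change ¬ ¬ ((_ : Fin 3) = _); decide) | (rename_i h _ _; revert h; change ¬ ((_ : Fin 3) = _); decide) | (rename_i h _ _; revert h; change ¬ ¬ ((_ : Fin 3) = _); decide) | (rename_i h _ _ _; revert h; change ¬ ((_ : Fin 3) = _); decide) | (rename_i h _ _ _; revert h; change ¬ ¬ ((_ : Fin 3) = _); decide))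
  all_goals
    first
    | ring1
    | linear_combination (-1 : ZMod n) * hr
    | linear_combination (-r : ZMod n) * hr

lemma Lmap_smul (s : ZMod n) (v : ZMod n × ZMod n × ZMod n) :
    Lmap r (s • v) = s • Lmap r v := by
  obtain ⟨x, y, z⟩ := v
  simp only [Lmap, Prod.smul_mk, smul_eq_mul, Prod.mk.injEq]
  refine ⟨by ring, by ring, by ring⟩

lemma pow_vzero (v : ZMod n × ZMod n × ZMod n) (k : ℕ) :
    (⟨v, 0⟩ : Kgrp n r hr) ^ k = ⟨(k : ZMod n) • v, 0⟩ := by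
  induction k with
  | zero => simp
  | succ k ih =>
    rw [pow_succ, ih]
    refine Kgrp.ext ?_ ?_
    · show r ^ (0 : ZMod 3).val • ((k : ZMod n) • v) + v = ((k + 1 : ℕ) : ZMod n) • v
      simp [add_smul]
    · show (0 : ZMod 3) + 0 = 0
      simp

end Aux

open Kgrp in
/-- There exists an automorphism of the group `K` sending
`a ↦ a^(−1)·c^r`, `b ↦ a^r·b^(r²)·c^(−r²)`, `c ↦ a^(−r²)·b^(r²)·c^(−r²)`,
`h ↦ h·a^(−r)·b·c^(r²)`, where `x ^ s` for `s : ZMod n` denotes `x ^ s.val`. -/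
theorem stmt5 (n : ℕ) (hn : 7 ≤ n) (r : ZMod n) (hr : r ^ 2 + r + 1 = 0) :
    ∃ φ : Kgrp n r hr ≃* Kgrp n r hr,
      φ (gena n r hr) = (gena n r hr) ^ ((-1 : ZMod n)).val * (genc n r hr) ^ r.val ∧
      φ (genb n r hr) =
        (gena n r hr) ^ r.val * (genb n r hr) ^ ((r ^ 2)).val * (genc n r hr) ^ (-(r ^ 2)).val ∧
      φ (genc n r hr) =
        (gena n r hr) ^ (-(r ^ 2)).val * (genb n r hr) ^ ((r ^ 2)).val *
          (genc n r hr) ^ (-(r ^ 2)).val ∧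
      φ (genh n r hr) =
        genh n r hr * (gena n r hr) ^ (-r).val * genb n r hr * (genc n r hr) ^ ((r ^ 2)).val := by

  have hNZ : NeZero n := ⟨by omega⟩
  have hval : ∀ s : ZMod n, ((s.val : ℕ) : ZMod n) = s := fun s => by
    haveI : NeZero n := ⟨by omega⟩
    rw [ZMod.natCast_val, ZMod.cast_id]
  refine ⟨MulEquiv.mk' ⟨fun x => ⟨cf r x.t • u0 r + Lmap r x.v, x.t⟩,
    fun x => ⟨Linv r (x.v - cf r x.t • u0 r), x.t⟩, ?_, ?_⟩ ?_, ?_, ?_, ?_, ?_⟩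
  · intro x
    refine Kgrp.ext ?_ rfl
    show Linv r (cf r x.t • u0 r + Lmap r x.v - cf r x.t • u0 r) = x.v
    rw [add_sub_cancel_left, Linv_Lmap hr]
  · intro x
    refine Kgrp.ext ?_ rfl
    show cf r x.t • u0 r + Lmap r (Linv r (x.v - cf r x.t • u0 r)) = x.v
    rw [Lmap_Linv hr, add_sub_cancel]
  · intro x y
    refine Kgrp.ext ?_ rfl
    show cf r (x.t + y.t) • u0 r + Lmap r (r ^ y.t.val • x.v + y.v) =
      r ^ y.t.val • (cf r x.t • u0 r + Lmap r x.v) + (cf r y.t • u0 r + Lmap r y.v)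
    have : Lmap r (r ^ y.t.val • x.v + y.v) = r ^ y.t.val • Lmap r x.v + Lmap r y.v := by
      obtain ⟨a1, a2, a3⟩ := x.v; obtain ⟨b1, b2, b3⟩ := y.v
      simp only [Lmap, Prod.smul_mk, Prod.mk_add_mk, smul_eq_mul, Prod.mk.injEq]
      refine ⟨by ring, by ring, by ring⟩
    rw [this, cf_cocycle hr, add_smul, smul_add, smul_smul, mul_comm (r ^ y.t.val)]
    rw [← smul_smul]
    abel
  all_goals simp only [gena, genb, genc, genh, pow_vzero, hval]
  · refine Kgrp.ext ?_ rfl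
    show cf r 0 • u0 r + Lmap r (1, 0, 0) =
      r ^ (0 : ZMod 3).val • ((-1 : ZMod n) • ((1:ZMod n), (0:ZMod n), (0:ZMod n))) + r • (0, 0, 1)
    simp [cf, u0, Lmap, Prod.ext_iff]
  · refine Kgrp.ext ?_ rfl
    show cf r 0 • u0 r + Lmap r (0, 1, 0) =
      r ^ (0 : ZMod 3).val • (r ^ (0 : ZMod 3).val • (r • ((1:ZMod n), (0:ZMod n), (0:ZMod n))) +
        r ^ 2 • (0, 1, 0)) + (-(r ^ 2)) • (0, 0, 1)
    simp [cf, u0, Lmap, Prod.ext_iff]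
  · refine Kgrp.ext ?_ rfl
    show cf r 0 • u0 r + Lmap r (0, 0, 1) =
      r ^ (0 : ZMod 3).val • (r ^ (0 : ZMod 3).val • ((-(r ^ 2)) • ((1:ZMod n), (0:ZMod n), (0:ZMod n))) +
        r ^ 2 • (0, 1, 0)) + (-(r ^ 2)) • (0, 0, 1)
    simp [cf, u0, Lmap, Prod.ext_iff]
  · refine Kgrp.ext ?_ ?_
    · show cf r 1 • u0 r + Lmap r (0, 0, 0) =
        r ^ (0 : ZMod 3).val • (r ^ (0 : ZMod 3).val • (r ^ (0 : ZMod 3).val •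
          ((0:ZMod n),(0:ZMod n),(0:ZMod n)) + (-r) • ((1:ZMod n), (0:ZMod n), (0:ZMod n))) + (0,1,0)) +
          (r ^ 2) • (0, 0, 1)
      simp [cf, u0, Lmap, Prod.ext_iff]
    · rfl
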